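/- Let A be an invertible symmetric 3×3 complex matrix, and let x₀, N₀ ∈ ℂ³ with N₀ᵀN₀ = 1. Suppose that for both signs ± there exist scalars F_± with F_±(N₀ᵀx₀ · √A x₀ ± i(√A)⁻¹N₀ × √A x₀ − (√A)⁻¹N₀) = N₀ᵀx₀ · √A N₀ ± i(√A)⁻¹N₀ × √A N₀ (an equality of vectors in ℂ³), where √A is a symmetric square root of A. Then F_± = N₀ᵀx₀ / ((N₀ᵀx₀)² − N₀ᵀA⁻¹N₀) and (I₃ − N₀N₀ᵀ)(A⁻¹ − x₀x₀ᵀ)N₀ = 0. -/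

import Mathlib

open Matrix

private lemma cross_cross_self (u v : Fin 3 → ℂ) :
    u ⨯₃ (u ⨯₃ v) = (u ⬝ᵥ v) • u - (u ⬝ᵥ u) • v := by
  ext i
  fin_cases i <;>
    simp [cross_apply, dotProduct, Fin.sum_univ_three] <;> ring

private lemma vecMulVec_mulVec' (u v w : Fin 3 → ℂ) :
    vecMulVec u v *ᵥ w = (v ⬝ᵥ w) • u := by
  ext i
  simp [vecMulVec_apply, mulVec, dotProduct, Finset.mul_sum, Fin.sum_univ_three]
  ring

/-- If the tangency-configuration fraction is independent of the ruling parameter for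
both families of rulings of the confocal quadric (i.e. the scalars `F_±` satisfy the
stated vector equations built from the Ivory affinity data `√A, x₀, N₀`), then
`F_± = N₀ᵀx₀/((N₀ᵀx₀)² − N₀ᵀA⁻¹N₀)` and `(I₃ − N₀N₀ᵀ)(A⁻¹ − x₀x₀ᵀ)N₀ = 0`. -/
theorem tangency_fraction_confocal
    (A sA : Matrix (Fin 3) (Fin 3) ℂ) (x₀ N₀ : Fin 3 → ℂ) (Fp Fm : ℂ)
    (hAsym : Aᵀ = A) (hAdet : A.det ≠ 0)
    (hsq : sA * sA = A) (hsAsym : sAᵀ = sA)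
    (hN : N₀ ⬝ᵥ N₀ = 1)
    (hnd : (N₀ ⬝ᵥ x₀) ^ 2 - N₀ ⬝ᵥ (A⁻¹ *ᵥ N₀) ≠ 0)
    (hp : Fp • ((N₀ ⬝ᵥ x₀) • (sA *ᵥ x₀)
            + Complex.I • ((sA⁻¹ *ᵥ N₀) ⨯₃ (sA *ᵥ x₀)) - sA⁻¹ *ᵥ N₀)
        = (N₀ ⬝ᵥ x₀) • (sA *ᵥ N₀) + Complex.I • ((sA⁻¹ *ᵥ N₀) ⨯₃ (sA *ᵥ N₀)))
    (hm : Fm • ((N₀ ⬝ᵥ x₀) • (sA *ᵥ x₀)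
            - Complex.I • ((sA⁻¹ *ᵥ N₀) ⨯₃ (sA *ᵥ x₀)) - sA⁻¹ *ᵥ N₀)
        = (N₀ ⬝ᵥ x₀) • (sA *ᵥ N₀) - Complex.I • ((sA⁻¹ *ᵥ N₀) ⨯₃ (sA *ᵥ N₀))) :
    Fp = (N₀ ⬝ᵥ x₀) / ((N₀ ⬝ᵥ x₀) ^ 2 - N₀ ⬝ᵥ (A⁻¹ *ᵥ N₀)) ∧
    Fm = (N₀ ⬝ᵥ x₀) / ((N₀ ⬝ᵥ x₀) ^ 2 - N₀ ⬝ᵥ (A⁻¹ *ᵥ N₀)) ∧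
    ((1 - vecMulVec N₀ N₀) * (A⁻¹ - vecMulVec x₀ x₀)) *ᵥ N₀ = 0 := by
  set σ : ℂ := N₀ ⬝ᵥ x₀ with hσ
  set τ : ℂ := N₀ ⬝ᵥ (A⁻¹ *ᵥ N₀) with hτ
  set n : Fin 3 → ℂ := sA⁻¹ *ᵥ N₀ with hn
  set y : Fin 3 → ℂ := sA *ᵥ x₀ with hy
  set m : Fin 3 → ℂ := sA *ᵥ N₀ with hmdef
  -- invertibility of sA
  have hsdet : sA.det ≠ 0 := by
    intro h
    apply hAdet
    rw [← hsq, det_mul, h, mul_zero]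
  have hsu : IsUnit sA.det := isUnit_iff_ne_zero.mpr hsdet
  have hinv1 : sA⁻¹ * sA = 1 := nonsing_inv_mul sA hsu
  have hAinv : A⁻¹ = sA⁻¹ * sA⁻¹ := by rw [← hsq, Matrix.mul_inv_rev]
  have hsiT : sA⁻¹ᵀ = sA⁻¹ := by rw [transpose_nonsing_inv, hsAsym]
  -- dot product facts
  have hdot' : ∀ u v : Fin 3 → ℂ, (sA⁻¹ *ᵥ u) ⬝ᵥ v = u ⬝ᵥ (sA⁻¹ *ᵥ v) := by
    intro u v
    conv_lhs => rw [← hsiT, mulVec_transpose]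
    rw [← dotProduct_mulVec]
  have hdot : ∀ u v : Fin 3 → ℂ, (sA⁻¹ *ᵥ u) ⬝ᵥ (sA *ᵥ v) = u ⬝ᵥ v := by
    intro u v
    rw [hdot', mulVec_mulVec, hinv1, one_mulVec]
  have hny : n ⬝ᵥ y = σ := hdot N₀ x₀
  have hnm : n ⬝ᵥ m = 1 := by rw [hn, hmdef, hdot, hN]
  have hnn : n ⬝ᵥ n = τ := by
    rw [hn, hdot', mulVec_mulVec, ← hAinv, hτ]
  -- dotting hp, hm with n gives the scalar values
  have hFp : Fp * (σ ^ 2 - τ) = σ := by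
    have h := congrArg (fun v => n ⬝ᵥ v) hp
    simp only [dotProduct_add, dotProduct_sub, dotProduct_smul, dot_self_cross,
      smul_eq_mul, hny, hnm, hnn, mul_zero, add_zero, mul_one] at h
    linear_combination h
  have hFm : Fm * (σ ^ 2 - τ) = σ := by
    have h := congrArg (fun v => n ⬝ᵥ v) hm
    simp only [dotProduct_add, dotProduct_sub, dotProduct_smul, dot_self_cross,
      smul_eq_mul, hny, hnm, hnn, mul_zero, add_zero, sub_zero, mul_one] at h
    linear_combination h
  have hFpv : Fp = σ / (σ ^ 2 - τ) := by rw [eq_div_iff hnd]; exact hFp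
  have hFmv : Fm = σ / (σ ^ 2 - τ) := by rw [eq_div_iff hnd]; exact hFm
  refine ⟨hFpv, hFmv, ?_⟩
  have hF : Fm = Fp := by rw [hFpv, hFmv]
  rw [hF] at hm
  -- (b): Fp • (σ•y − n) = σ • m
  have hb : Fp • (σ • y - n) = σ • m := by
    apply smul_right_injective (Fin 3 → ℂ) (two_ne_zero (α := ℂ))
    calc (2:ℂ) • (Fp • (σ • y - n))
        = Fp • (σ • y + Complex.I • (n ⨯₃ y) - n)
          + Fp • (σ • y - Complex.I • (n ⨯₃ y) - n) := by module
      _ = (σ • m + Complex.I • (n ⨯₃ m)) + (σ • m - Complex.I • (n ⨯₃ m)) := by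
          rw [hp, hm]
      _ = (2:ℂ) • (σ • m) := by module
  -- (c): Fp • (n ⨯₃ y) = n ⨯₃ m
  have hc : Fp • (n ⨯₃ y) = n ⨯₃ m := by
    apply smul_right_injective (Fin 3 → ℂ)
      (mul_ne_zero (two_ne_zero (α := ℂ)) Complex.I_ne_zero)
    calc ((2:ℂ) * Complex.I) • (Fp • (n ⨯₃ y))
        = Fp • (σ • y + Complex.I • (n ⨯₃ y) - n)
          - Fp • (σ • y - Complex.I • (n ⨯₃ y) - n) := by module
      _ = (σ • m + Complex.I • (n ⨯₃ m)) - (σ • m - Complex.I • (n ⨯₃ m)) := by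
          rw [hp, hm]
      _ = ((2:ℂ) * Complex.I) • (n ⨯₃ m) := by module
  -- (a): Fp • (σ•n − τ•y) = n − τ•m, from crossing hp with n
  have hx := congrArg (fun v => n ⨯₃ v) hp
  simp only [map_add, map_sub, _root_.map_smul, cross_self, cross_cross_self,
    hny, hnn, hnm] at hx
  have ha : Fp • (σ • n - τ • y) = n - τ • m := by
    apply smul_right_injective (Fin 3 → ℂ) Complex.I_ne_zero
    calc Complex.I • (Fp • (σ • n - τ • y))
        = Fp • (σ • (n ⨯₃ y) + Complex.I • (σ • n - τ • y) - 0)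
          - σ • (Fp • (n ⨯₃ y)) := by module
      _ = (σ • (n ⨯₃ m) + Complex.I • ((1:ℂ) • n - τ • m)) - σ • (n ⨯₃ m) := by
          rw [hx, hc]
      _ = Complex.I • (n - τ • m) := by module
  -- the key vector identity  σ•y = (σ²−τ)•m + n
  have E : σ • y = (σ ^ 2 - τ) • m + n := by
    calc σ • y = (Fp * (σ ^ 2 - τ)) • y := by rw [hFp]
      _ = σ • (Fp • (σ • y - n)) + Fp • (σ • n - τ • y) := by module
      _ = σ • (σ • m) + (n - τ • m) := by rw [hb, ha]
      _ = (σ ^ 2 - τ) • m + n := by module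
  -- transport through sA⁻¹
  have E' : σ • x₀ = (σ ^ 2 - τ) • N₀ + A⁻¹ *ᵥ N₀ := by
    have h := congrArg (fun v => sA⁻¹ *ᵥ v) E
    simp only [mulVec_add, mulVec_smul, hy, hmdef, hn, mulVec_mulVec, hinv1,
      one_mulVec, ← hAinv] at h
    exact h
  -- conclude
  rw [← mulVec_mulVec, sub_mulVec, sub_mulVec, vecMulVec_mulVec',
    vecMulVec_mulVec', one_mulVec, dotProduct_sub, dotProduct_smul,
    dotProduct_comm x₀ N₀, ← hσ, ← hτ, smul_eq_mul]
  have h := E'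
  set w : Fin 3 → ℂ := A⁻¹ *ᵥ N₀
  calc w - σ • x₀ - (τ - σ * σ) • N₀
      = (σ ^ 2 - τ) • N₀ + w - σ • x₀ := by module
    _ = σ • x₀ - σ • x₀ := by rw [← h]
    _ = 0 := by module
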